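/- Suppose a sequence Z(t) ≥ 0 satisfies Z(t+1) ≥ Z(t) − δ(t) or Z(t+1) ≥ 0, i.e., Z(t+1) ≥ max(Z(t) − δ(t), 0) in the weaker form that either Z(t+1) ≥ Z(t) − δ(t) or Z(t+1) ≥ 0 holds, with |δ(t)| ≤ δ_max. Let ε > 0, w = (ε/δ_max²)e^{−ε/δ_max}, and Q > 0. Then e^{w(Q−Z(t+1))} − e^{w(Q−Z(t))} ≤ e^{wQ} + w·e^{w(Q−Z(t))}·(δ(t) + ε/2). -/

import Mathlib

private lemma hderiv_neg (y : ℝ) :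
    HasDerivAt (fun x : ℝ => 1 + x + x ^ 2 / 2 - Real.exp x)
      (1 + y - Real.exp y) y := by
  have h1 : HasDerivAt (fun x : ℝ => 1 + x + x ^ 2 / 2)
      (0 + 1 + (2 : ℕ) * y ^ 1 / 2) y :=
    ((hasDerivAt_const y 1).add (hasDerivAt_id y)).add
      ((hasDerivAt_pow 2 y).div_const 2)
  have := h1.sub (Real.hasDerivAt_exp y)
  refine this.congr_deriv ?_
  push_cast; ring

private lemma hderiv_pos (y : ℝ) :
    HasDerivAt (fun x : ℝ => x ^ 2 / 2 + (1 + x) * Real.exp (-x) - 1)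
      (y - y * Real.exp (-y)) y := by
  have hexp : HasDerivAt (fun x : ℝ => Real.exp (-x)) (-Real.exp (-y)) y := by
    have := (Real.hasDerivAt_exp (-y)).comp y (hasDerivAt_neg y)
    exact this.congr_deriv (by ring)
  have h1 : HasDerivAt (fun x : ℝ => x ^ 2 / 2) ((2 : ℕ) * y ^ 1 / 2) y :=
    (hasDerivAt_pow 2 y).div_const 2
  have h2 : HasDerivAt (fun x : ℝ => (1 + x) * Real.exp (-x))
      ((0 + 1) * Real.exp (-y) + (1 + y) * (-Real.exp (-y))) y :=
    ((hasDerivAt_const y 1).add (hasDerivAt_id y)).mul hexp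
  have := (h1.add h2).sub (hasDerivAt_const y 1)
  refine this.congr_deriv ?_
  push_cast; ring

private lemma exp_le_quad_neg (x : ℝ) (hx : x ≤ 0) :
    Real.exp x ≤ 1 + x + x ^ 2 / 2 := by
  have key : AntitoneOn (fun x : ℝ => 1 + x + x ^ 2 / 2 - Real.exp x) (Set.Iic 0) := by
    apply antitoneOn_of_deriv_nonpos (convex_Iic 0)
    · exact (Continuous.continuousOn (by continuity))
    · intro y hy
      exact (hderiv_neg y).differentiableAt.differentiableWithinAt
    · intro y hy
      rw [(hderiv_neg y).deriv]
      have hy0 : y ≤ 0 := le_of_lt (by simpa using hy)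
      have := Real.add_one_le_exp y
      linarith
  have h0 : (fun x : ℝ => 1 + x + x ^ 2 / 2 - Real.exp x) 0 ≤
      (fun x : ℝ => 1 + x + x ^ 2 / 2 - Real.exp x) x :=
    key (by simp [hx]) (by simp) hx
  simp [Real.exp_zero] at h0
  linarith

private lemma exp_le_quad_pos (x : ℝ) (hx : 0 ≤ x) :
    Real.exp x ≤ 1 + x + x ^ 2 / 2 * Real.exp x := by
  have key : MonotoneOn (fun x : ℝ => x ^ 2 / 2 + (1 + x) * Real.exp (-x) - 1)
      (Set.Ici 0) := by
    apply monotoneOn_of_deriv_nonneg (convex_Ici 0)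
    · exact (Continuous.continuousOn (by continuity))
    · intro y hy
      exact (hderiv_pos y).differentiableAt.differentiableWithinAt
    · intro y hy
      rw [(hderiv_pos y).deriv]
      have hy0 : (0:ℝ) ≤ y := le_of_lt (by simpa using hy)
      have h1 : Real.exp (-y) ≤ 1 := Real.exp_le_one_iff.2 (by linarith)
      nlinarith
  have h0 : (fun x : ℝ => x ^ 2 / 2 + (1 + x) * Real.exp (-x) - 1) 0 ≤
      (fun x : ℝ => x ^ 2 / 2 + (1 + x) * Real.exp (-x) - 1) x :=
    key (by simp) (by simpa using hx) hx
  simp [Real.exp_zero] at h0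
  have hE : 0 < Real.exp x := Real.exp_pos x
  have hinv : Real.exp (-x) = (Real.exp x)⁻¹ := Real.exp_neg x
  rw [hinv] at h0
  have hc : (Real.exp x)⁻¹ * Real.exp x = 1 := inv_mul_cancel₀ hE.ne'
  nlinarith [mul_le_mul_of_nonneg_right h0 hE.le]

private lemma exp_le_quad (x : ℝ) :
    Real.exp x ≤ 1 + x + x ^ 2 / 2 * Real.exp |x| := by
  rcases le_or_gt x 0 with hx | hx
  · have h1 := exp_le_quad_neg x hx
    have h2 : (1:ℝ) ≤ Real.exp |x| := Real.one_le_exp (abs_nonneg x)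
    nlinarith [sq_nonneg x]
  · rw [abs_of_pos hx]
    exact exp_le_quad_pos x hx.le

theorem exp_drift_lower (Z δ : ℕ → ℝ) (δ_max ε Q : ℝ)
    (hδmax : 0 < δ_max) (hε : 0 < ε) (hQ : 0 < Q)
    (hZ : ∀ t, 0 ≤ Z t)
    (hδ : ∀ t, |δ t| ≤ δ_max)
    (hdyn : ∀ t, Z t - δ t ≤ Z (t + 1) ∨ 0 ≤ Z (t + 1)) :
    ∀ t,
      let w := (ε / δ_max ^ 2) * Real.exp (-ε / δ_max)
      Real.exp (w * (Q - Z (t + 1))) - Real.exp (w * (Q - Z t)) ≤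
        Real.exp (w * Q) + w * Real.exp (w * (Q - Z t)) * (δ t + ε / 2) := by
  intro t w
  have hexpneg : 0 < Real.exp (-ε / δ_max) := Real.exp_pos _
  have hw : 0 < w := mul_pos (div_pos hε (pow_pos hδmax 2)) hexpneg
  have hwd : w * δ_max = (ε / δ_max) * Real.exp (-ε / δ_max) := by
    simp only [w]; field_simp
  -- w * δ_max ≤ ε / δ_max
  have h1 : w * δ_max ≤ ε / δ_max := by
    rw [hwd]
    have : Real.exp (-ε / δ_max) ≤ 1 := Real.exp_le_one_iff.2
      (by rw [neg_div]; exact neg_nonpos_of_nonneg (div_pos hε hδmax).le)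
    nlinarith [div_pos hε hδmax]
  -- w * δ_max ≤ 1
  have h2 : w * δ_max ≤ 1 := by
    rw [hwd]
    have hu : 0 < ε / δ_max := div_pos hε hδmax
    have hle : ε / δ_max ≤ Real.exp (ε / δ_max) := by
      have := Real.add_one_le_exp (ε / δ_max); linarith
    have hprod : Real.exp (-ε / δ_max) * Real.exp (ε / δ_max) = 1 := by
      rw [← Real.exp_add]; ring_nf; exact Real.exp_zero
    nlinarith [Real.exp_pos (ε / δ_max)]
  -- (w * δ_max)^2 / 2 * exp (w * δ_max) ≤ w * ε / 2
  have h3 : (w * δ_max) ^ 2 / 2 * Real.exp (w * δ_max) ≤ w * ε / 2 := by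
    have hkey : w * δ_max ^ 2 * Real.exp (w * δ_max) ≤ ε := by
      have : w * δ_max ^ 2 = ε * Real.exp (-ε / δ_max) := by
        simp only [w]; field_simp
      rw [this, mul_assoc, ← Real.exp_add]
      have harg : -ε / δ_max + w * δ_max ≤ 0 := by
        have : -ε / δ_max + ε / δ_max = 0 := by ring
        linarith [h1]
      have := Real.exp_le_one_iff.2 harg
      nlinarith
    have hE : 0 < Real.exp (w * δ_max) := Real.exp_pos _
    nlinarith
  have hE : 0 < Real.exp (w * (Q - Z t)) := Real.exp_pos _
  have hQE : 0 < Real.exp (w * Q) := Real.exp_pos _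
  have hδt := hδ t
  have hδ1 : -δ_max ≤ δ t := neg_le_of_abs_le hδt
  have hδ2 : δ t ≤ δ_max := le_of_abs_le hδt
  rcases hdyn t with h | h
  · -- Z t - δ t ≤ Z (t+1)
    have hA : Real.exp (w * (Q - Z (t + 1))) ≤
        Real.exp (w * (Q - Z t)) * Real.exp (w * δ t) := by
      rw [← Real.exp_add]
      apply Real.exp_le_exp.2
      nlinarith
    have hquad := exp_le_quad (w * δ t)
    have habs : |w * δ t| ≤ w * δ_max := by
      rw [abs_mul, abs_of_pos hw]
      exact mul_le_mul_of_nonneg_left hδt hw.le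
    have hexpabs : Real.exp |w * δ t| ≤ Real.exp (w * δ_max) :=
      Real.exp_le_exp.2 habs
    have hsq : (w * δ t) ^ 2 ≤ (w * δ_max) ^ 2 := by
      have := abs_nonneg (w * δ t)
      nlinarith [sq_abs (w * δ t)]
    have hrem : (w * δ t) ^ 2 / 2 * Real.exp |w * δ t| ≤ w * ε / 2 := by
      have hEa : 0 < Real.exp |w * δ t| := Real.exp_pos _
      have : (w * δ t) ^ 2 / 2 * Real.exp |w * δ t| ≤
          (w * δ_max) ^ 2 / 2 * Real.exp (w * δ_max) := by
        apply mul_le_mul (by linarith) hexpabs hEa.le (by positivity)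
      linarith
    have hexpwδ : Real.exp (w * δ t) ≤ 1 + w * δ t + w * ε / 2 := by
      linarith
    have hstep : Real.exp (w * (Q - Z t)) * Real.exp (w * δ t) ≤
        Real.exp (w * (Q - Z t)) * (1 + w * δ t + w * ε / 2) :=
      mul_le_mul_of_nonneg_left hexpwδ hE.le
    have heq : Real.exp (w * (Q - Z t)) * (1 + w * δ t + w * ε / 2) -
        Real.exp (w * (Q - Z t)) =
        w * Real.exp (w * (Q - Z t)) * (δ t + ε / 2) := by ring
    linarith
  · -- 0 ≤ Z (t+1)
    have hA : Real.exp (w * (Q - Z (t + 1))) ≤ Real.exp (w * Q) := by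
      apply Real.exp_le_exp.2
      nlinarith
    have hlow : -1 ≤ w * (δ t + ε / 2) := by nlinarith
    nlinarith
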